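/- Let x ≠ 0 in ℝ^n, r = I(x)/‖x‖_∞, and s ∈ ∂I(x). Then r ≤ ‖s‖_1. Moreover, r = ‖s‖_1 if and only if x/‖x‖_∞ ∈ Sgn(s) componentwise (i.e., x_i/‖x‖_∞ ∈ Sgn(s_i) for each i). -/
import Mathlib


open Finset

noncomputable def Ifun {n : ℕ} (w : Fin n → Fin n → ℝ) (x : Fin n → ℝ) : ℝ :=
  (1 / 2) * ∑ i, ∑ j, w i j * |x i - x j|

noncomputable def SgnSet (t : ℝ) : Set ℝ :=
  if 0 < t then {1} else if t < 0 then {-1} else Set.Icc (-1) 1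

noncomputable def subgrad {n : ℕ} (w : Fin n → Fin n → ℝ) (y : Fin n → ℝ) :
    Set (Fin n → ℝ) :=
  {s | ∃ z : Fin n → Fin n → ℝ, (∀ i j, z i j ∈ SgnSet (y i - y j)) ∧
    (∀ i j, z i j = - z j i) ∧ ∀ i, s i = ∑ j, w i j * z i j}

lemma sgn_mul {t z : ℝ} (hz : z ∈ SgnSet t) : z * t = |t| := by
  unfold SgnSet at hz
  rcases lt_trichotomy 0 t with h | h | h
  · simp [h] at hz; rw [hz, abs_of_pos h]; ring
  · simp [← h] at hz ⊢
  · rw [if_neg (by linarith), if_pos h] at hz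
    simp at hz; rw [hz, abs_of_neg h]; ring

/-- For `x ≠ 0`, `r = I(x)/‖x‖_∞` and `s ∈ ∂I(x)`: `r ≤ ‖s‖₁`, with equality iff
`x/‖x‖_∞ ∈ Sgn(s)` componentwise. -/
theorem stmt8 {n : ℕ} (w : Fin n → Fin n → ℝ)
    (hsym : ∀ i j, w i j = w j i) (hnn : ∀ i j, 0 ≤ w i j)
    (x : Fin n → ℝ) (hx : x ≠ 0) (r : ℝ) (hr : r = Ifun w x / ‖x‖)
    (s : Fin n → ℝ) (hs : s ∈ subgrad w x) :
    r ≤ ∑ i, |s i| ∧ (r = ∑ i, |s i| ↔ ∀ i, x i / ‖x‖ ∈ SgnSet (s i)) := by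
  obtain ⟨z, hz1, hz2, hz3⟩ := hs
  have hxpos : (0:ℝ) < ‖x‖ := norm_pos_iff.mpr hx
  have hbd : ∀ i, |x i| ≤ ‖x‖ := fun i => by
    simpa [Real.norm_eq_abs] using norm_le_pi_norm x i
  -- key identity: ∑ x i * s i = Ifun w x
  have key : ∑ i, x i * s i = Ifun w x := by
    have h1 : ∑ i, x i * s i = ∑ i, ∑ j, w i j * z i j * x i := by
      refine Finset.sum_congr rfl fun i _ => ?_
      rw [hz3 i, Finset.mul_sum]
      exact Finset.sum_congr rfl fun j _ => by ring
    have h2 : ∑ i, ∑ j, w i j * z i j * x i = -∑ i, ∑ j, w i j * z i j * x j := by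
      rw [Finset.sum_comm]
      rw [← Finset.sum_neg_distrib]
      refine Finset.sum_congr rfl fun j _ => ?_
      rw [← Finset.sum_neg_distrib]
      refine Finset.sum_congr rfl fun i _ => ?_
      rw [hsym j i, hz2 j i]; ring
    have h3 : (2:ℝ) * ∑ i, x i * s i = ∑ i, ∑ j, w i j * |x i - x j| := by
      have e : (2:ℝ) * ∑ i, x i * s i
          = ∑ i, ∑ j, w i j * z i j * x i - ∑ i, ∑ j, w i j * z i j * x j := by
        rw [h1]; linarith [h2]
      rw [e, ← Finset.sum_sub_distrib]
      refine Finset.sum_congr rfl fun i _ => ?_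
      rw [← Finset.sum_sub_distrib]
      refine Finset.sum_congr rfl fun j _ => ?_
      linear_combination w i j * sgn_mul (hz1 i j)
    unfold Ifun
    linarith
  -- termwise bound
  have term : ∀ i, x i * s i ≤ ‖x‖ * |s i| := fun i => by
    calc x i * s i ≤ |x i * s i| := le_abs_self _
      _ = |x i| * |s i| := abs_mul _ _
      _ ≤ ‖x‖ * |s i| := by
          exact mul_le_mul_of_nonneg_right (hbd i) (abs_nonneg _)
  have hle : Ifun w x ≤ ‖x‖ * ∑ i, |s i| := by
    rw [← key, Finset.mul_sum]
    exact Finset.sum_le_sum fun i _ => term i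
  constructor
  · rw [hr, div_le_iff₀ hxpos]
    linarith [hle]
  · rw [hr, div_eq_iff (ne_of_gt hxpos)]
    have hiff : Ifun w x = (∑ i, |s i|) * ‖x‖ ↔ ∀ i, x i * s i = ‖x‖ * |s i| := by
      rw [← key]
      constructor
      · intro h
        have h' : ∑ i, ‖x‖ * |s i| = ∑ i, x i * s i := by
          rw [h, ← Finset.mul_sum]; ring
        have := (Finset.sum_eq_sum_iff_of_le (fun i _ => term i)).mp h'.symm
        exact fun i => (this i (Finset.mem_univ i))
      · intro h
        rw [Finset.sum_congr rfl fun i _ => h i, ← Finset.mul_sum]; ring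
    rw [hiff]
    refine forall_congr' fun i => ?_
    unfold SgnSet
    rcases lt_trichotomy 0 (s i) with h | h | h
    · rw [if_pos h]
      simp only [Set.mem_singleton_iff]
      rw [abs_of_pos h, div_eq_one_iff_eq (ne_of_gt hxpos)]
      constructor
      · intro he; exact mul_right_cancel₀ (ne_of_gt h) (by linarith)
      · intro he; rw [he]
    · rw [if_neg (by rw [← h]; exact lt_irrefl 0), if_neg (by rw [← h]; exact lt_irrefl 0)]
      rw [← h]
      simp only [mul_zero, abs_zero, Set.mem_Icc]
      constructor
      · intro _
        constructor
        · rw [le_div_iff₀ hxpos]; have := (abs_le.mp (hbd i)).1; linarith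
        · rw [div_le_one hxpos]; exact (abs_le.mp (hbd i)).2
      · intro _; trivial
    · rw [if_neg (by linarith), if_pos h]
      simp only [Set.mem_singleton_iff]
      rw [abs_of_neg h, div_eq_iff (ne_of_gt hxpos)]
      constructor
      · intro he
        have h2 : x i * s i = (-1 * ‖x‖) * s i := by rw [he]; ring
        exact mul_right_cancel₀ (ne_of_lt h) h2
      · intro he; rw [he]; ring
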